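/- Let P be a periodic pattern of length m over {0,…,σ−1}, and let s = L-head(P) and H = L-root(P). For every j ∈ [1..n], the longest common prefix of P and T[j..n] has length ≥ 3τ−1 if and only if j ∈ R_{s,H}. Moreover, if j ∈ R_{s,H} then, letting t = pend(P) − 1 and t′ = rend(j) − j, the longest common prefix of P and T[j..n] has length ≥ min(t,t′) and: (1) if type(P) ≠ type(j), then P ≺ T[j..n] if and only if type(P) < type(j); (2) if type(P) = type(j) = −1 and t ≠ t′, then P ≺ T[j..n] if and only if t < t′; (3) if type(P) = type(j) = +1 and t ≠ t′, then P ≺ T[j..n] if and only if t > t′; (4) if type(P) ≠ type(j) or t ≠ t′, then P ≠ T[j..n] and the longest common prefix of P and T[j..n] has length exactly min(t,t′). -/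

import Mathlib

open scoped Classical

namespace CSA

/-- Character of a 1-indexed string at position `i` (junk value 0 out of range). -/
def idx (S : List ℕ) (i : ℕ) : ℕ := S.getD (i - 1) 0

/-- Substring `S[i..j)` in the 1-indexed, half-open convention. -/
def sub (S : List ℕ) (i j : ℕ) : List ℕ := (S.drop (i - 1)).take (j - i)

/-- Suffix `S[i..|S|]` (1-indexed). -/
def suf (S : List ℕ) (i : ℕ) : List ℕ := S.drop (i - 1)

/-- Length of the longest common prefix of two strings. -/
def lcp (A B : List ℕ) : ℕ := ((A.zip B).takeWhile fun p => p.1 == p.2).length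

/-- `LCE T j₁ j₂` is the length of the longest common prefix of `T[j₁..n]` and `T[j₂..n]`. -/
def LCE (T : List ℕ) (j₁ j₂ : ℕ) : ℕ := lcp (suf T j₁) (suf T j₂)

/-- `p` is a period of `S`. -/
def IsPeriod (S : List ℕ) (p : ℕ) : Prop :=
  1 ≤ p ∧ p ≤ S.length ∧ ∀ i, i + p < S.length → S.getD i 0 = S.getD (i + p) 0

/-- The shortest period of `S`. -/
noncomputable def per (S : List ℕ) : ℕ := sInf {p | IsPeriod S p}

/-- `R = {i ∈ [1..n−3τ+2] : per(T[i..i+3τ−1)) ≤ τ/3}`. -/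
noncomputable def R (T : List ℕ) (τ : ℕ) : Set ℕ :=
  {i | 1 ≤ i ∧ i + 3 * τ ≤ T.length + 2 ∧ 3 * per (sub T i (i + 3 * τ - 1)) ≤ τ}

/-- `rend(j) = min{j′ ≥ j : j′ ∉ R} + 3τ − 2`. -/
noncomputable def rend (T : List ℕ) (τ j : ℕ) : ℕ :=
  sInf {j' | j ≤ j' ∧ j' ∉ R T τ} + 3 * τ - 2

/-- `L-root(j)`: lexicographically smallest among `{T[j+t..j+t+p) : 0 ≤ t < p}`
where `p = per(T[j..j+3τ−1))`. -/
noncomputable def Lroot (T : List ℕ) (τ j : ℕ) : List ℕ :=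
  (((Finset.range (per (sub T j (j + 3 * τ - 1)))).image fun t =>
      sub T (j + t) (j + t + per (sub T j (j + 3 * τ - 1)))).min).untopD []

/-- `L-head(j)`: the (unique) `s ∈ [0..p)` with `T[j+s..j+s+p) = L-root(j)`. -/
noncomputable def Lhead (T : List ℕ) (τ j : ℕ) : ℕ :=
  sInf {s | s < per (sub T j (j + 3 * τ - 1)) ∧
    sub T (j + s) (j + s + per (sub T j (j + 3 * τ - 1))) = Lroot T τ j}

noncomputable def Lexp (T : List ℕ) (τ j : ℕ) : ℕ :=
  (rend T τ j - j - Lhead T τ j) / per (sub T j (j + 3 * τ - 1))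

noncomputable def Ltail (T : List ℕ) (τ j : ℕ) : ℕ :=
  (rend T τ j - j - Lhead T τ j) % per (sub T j (j + 3 * τ - 1))

noncomputable def rendfull (T : List ℕ) (τ j : ℕ) : ℕ := rend T τ j - Ltail T τ j

/-- `type(j) = +1` if `rend(j) ≤ n` and `T[rend(j)] > T[rend(j)−p]`, and `−1` otherwise. -/
noncomputable def typ (T : List ℕ) (τ j : ℕ) : ℤ :=
  if rend T τ j ≤ T.length ∧
      idx T (rend T τ j - per (sub T j (j + 3 * τ - 1))) < idx T (rend T τ j)
    then 1 else -1

noncomputable def Rminus (T : List ℕ) (τ : ℕ) : Set ℕ := {j ∈ R T τ | typ T τ j = -1}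

noncomputable def RH (T : List ℕ) (τ : ℕ) (H : List ℕ) : Set ℕ :=
  {j ∈ R T τ | Lroot T τ j = H}

noncomputable def RsH (T : List ℕ) (τ s : ℕ) (H : List ℕ) : Set ℕ :=
  {j ∈ R T τ | Lroot T τ j = H ∧ Lhead T τ j = s}

noncomputable def RminusH (T : List ℕ) (τ : ℕ) (H : List ℕ) : Set ℕ :=
  Rminus T τ ∩ RH T τ H

noncomputable def RminusSH (T : List ℕ) (τ s : ℕ) (H : List ℕ) : Set ℕ :=
  Rminus T τ ∩ RsH T τ s H

noncomputable def Rprime (T : List ℕ) (τ : ℕ) : Set ℕ := {j ∈ R T τ | j - 1 ∉ R T τ}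

/-- `Occ(P,S)`: the set of (1-indexed) starting positions of occurrences of `P` in `S`. -/
def OccSet (P S : List ℕ) : Set ℕ :=
  {j | 1 ≤ j ∧ j + P.length ≤ S.length + 1 ∧ sub S j (j + P.length) = P}

noncomputable def RangeBeg (P T : List ℕ) : ℕ :=
  Set.ncard {i | 1 ≤ i ∧ i ≤ T.length ∧ suf T i < P}

noncomputable def RangeEnd (P T : List ℕ) : ℕ := RangeBeg P T + (OccSet P T).ncard

/-- `ISA[j]`: the lexicographic rank of the suffix `T[j..n]` among all suffixes of `T`. -/
noncomputable def ISA (T : List ℕ) (j : ℕ) : ℕ :=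
  Set.ncard {j' | 1 ≤ j' ∧ j' ≤ T.length ∧ suf T j' ≤ suf T j}

/-- `succ_S(i) = min{j ∈ S ∪ {n−2τ+2} : j ≥ i}`. -/
noncomputable def succS (T : List ℕ) (τ : ℕ) (Sync : Set ℕ) (i : ℕ) : ℕ :=
  sInf {j | i ≤ j ∧ (j ∈ Sync ∨ j = T.length + 2 - 2 * τ)}

/-- The set `D` of distinguishing prefixes. -/
noncomputable def Dset (T : List ℕ) (τ : ℕ) (Sync : Set ℕ) : Set (List ℕ) :=
  {X | ∃ i, 1 ≤ i ∧ i + 3 * τ ≤ T.length + 2 ∧ i ∉ R T τ ∧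
    X = sub T i (succS T τ Sync i + 2 * τ)}

/-- `T^∞[i] = T[1 + ((i−1) mod n)]` for `i : ℤ`. -/
def tinf (T : List ℕ) (i : ℤ) : ℕ := idx T (((i - 1).emod (T.length : ℤ)).toNat + 1)

/-- `W[i]`: the reverse of `T^∞[s^lex_i − τ .. s^lex_i + 2τ)`. -/
def Wstr (T : List ℕ) (τ : ℕ) (slex : ℕ → ℕ) (i : ℕ) : List ℕ :=
  ((List.range (3 * τ)).map fun k => tinf T ((slex i : ℤ) - (τ : ℤ) + (k : ℤ))).reverse

/- Pattern versions of the `L`-decomposition functions. -/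

noncomputable def perP (τ : ℕ) (P : List ℕ) : ℕ := per (P.take (3 * τ - 1))

/-- A pattern is periodic if `|P| ≥ 3τ−1` and `per(P[1..3τ−1]) ≤ τ/3`. -/
noncomputable def Periodic (τ : ℕ) (P : List ℕ) : Prop :=
  3 * τ - 1 ≤ P.length ∧ 3 * perP τ P ≤ τ

noncomputable def pend (τ : ℕ) (P : List ℕ) : ℕ :=
  1 + perP τ P + lcp P (P.drop (perP τ P))

noncomputable def LrootP (τ : ℕ) (P : List ℕ) : List ℕ :=
  (((Finset.range (perP τ P)).image fun t => (P.drop t).take (perP τ P)).min).untopD []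

noncomputable def LheadP (τ : ℕ) (P : List ℕ) : ℕ :=
  sInf {s | s < perP τ P ∧ (P.drop s).take (perP τ P) = LrootP τ P}

noncomputable def LexpP (τ : ℕ) (P : List ℕ) : ℕ :=
  (pend τ P - 1 - LheadP τ P) / perP τ P

noncomputable def LtailP (τ : ℕ) (P : List ℕ) : ℕ :=
  (pend τ P - 1 - LheadP τ P) % perP τ P

noncomputable def pendfullP (τ : ℕ) (P : List ℕ) : ℕ := pend τ P - LtailP τ P

noncomputable def typP (τ : ℕ) (P : List ℕ) : ℤ :=
  if pend τ P ≤ P.length ∧ idx P (pend τ P - perP τ P) < idx P (pend τ P)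
    then 1 else -1

/-- `pow(H)`: the prefix of length `|H|·⌈τ/|H|⌉` of `H^∞`. -/
def powS (τ : ℕ) (H : List ℕ) : List ℕ :=
  (List.replicate ((τ + H.length - 1) / H.length) H).flatten

/- ===== auxiliary lemmas ===== -/

lemma lt_iff_lex (A B : List ℕ) : A < B ↔ List.Lex (·<·) A B := Iff.rfl

lemma getD_drop' (l : List ℕ) (a i : ℕ) : (l.drop a).getD i 0 = l.getD (a + i) 0 := by
  simp [List.getD_eq_getElem?_getD, List.getElem?_drop]

lemma getD_take' (l : List ℕ) (k i : ℕ) (h : i < k) :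
    (l.take k).getD i 0 = l.getD i 0 := by
  simp [List.getD_eq_getElem?_getD, List.getElem?_take, h]

lemma lcp_nil_left (B : List ℕ) : lcp [] B = 0 := rfl

lemma lcp_nil_right (A : List ℕ) : lcp A [] = 0 := by
  simp [lcp]

lemma lcp_cons (a b : ℕ) (A B : List ℕ) :
    lcp (a :: A) (b :: B) = if a = b then lcp A B + 1 else 0 := by
  by_cases h : a = b <;> simp [lcp, List.takeWhile_cons, h]

lemma lcp_le_min (A B : List ℕ) : lcp A B ≤ min A.length B.length := by
  calc lcp A B ≤ (A.zip B).length := (List.takeWhile_sublist _).length_le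
    _ = min A.length B.length := List.length_zip

lemma getD_eq_of_lt_lcp : ∀ (A B : List ℕ) (i : ℕ), i < lcp A B → A.getD i 0 = B.getD i 0 := by
  intro A
  induction A with
  | nil => intro B i h; simp [lcp_nil_left] at h
  | cons a A ih =>
    intro B i h
    cases B with
    | nil => simp [lcp_nil_right] at h
    | cons b B =>
      rw [lcp_cons] at h
      by_cases hab : a = b
      · simp [hab] at h
        cases i with
        | zero => simpa using hab
        | succ i =>
          have := ih B i (by omega)
          simpa using this
      · simp [hab] at h

lemma le_lcp : ∀ (k : ℕ) (A B : List ℕ), k ≤ A.length → k ≤ B.length →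
    (∀ i < k, A.getD i 0 = B.getD i 0) → k ≤ lcp A B := by
  intro k
  induction k with
  | zero => intro A B _ _ _; exact Nat.zero_le _
  | succ k ih =>
    intro A B hA hB h
    cases A with
    | nil => simp at hA
    | cons a A =>
      cases B with
      | nil => simp at hB
      | cons b B =>
        have hab : a = b := by simpa using h 0 (by omega)
        rw [lcp_cons, if_pos hab]
        have := ih A B (by simpa using hA) (by simpa using hB)
          (fun i hi => by simpa using h (i+1) (by omega))
        omega

lemma lcp_getD_ne : ∀ (A B : List ℕ), lcp A B < A.length → lcp A B < B.length →
    A.getD (lcp A B) 0 ≠ B.getD (lcp A B) 0 := by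
  intro A
  induction A with
  | nil => intro B h _; simp at h
  | cons a A ih =>
    intro B hA hB
    cases B with
    | nil => simp at hB
    | cons b B =>
      by_cases hab : a = b
      · rw [lcp_cons, if_pos hab] at hA hB ⊢
        have := ih B (by simpa using hA) (by simpa using hB)
        simpa using this
      · rw [lcp_cons, if_neg hab] at hA hB ⊢
        simpa using hab

lemma lcp_eq_of_break (A B : List ℕ) (k : ℕ) (hA : k < A.length) (hB : k < B.length)
    (hag : ∀ i < k, A.getD i 0 = B.getD i 0) (hne : A.getD k 0 ≠ B.getD k 0) :
    lcp A B = k := by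
  have h1 : k ≤ lcp A B := le_lcp k A B (by omega) (by omega) hag
  by_contra h
  have h2 : k < lcp A B := by omega
  exact hne (getD_eq_of_lt_lcp A B k h2)

lemma take_eq_of_agree (A B : List ℕ) (k : ℕ) (hA : k ≤ A.length) (hB : k ≤ B.length)
    (h : ∀ i < k, A.getD i 0 = B.getD i 0) : A.take k = B.take k := by
  apply List.ext_getElem
  · simp; omega
  · intro i h1 h2
    have hik : i < k := by simp at h1; omega
    rw [← List.getD_eq_getElem (A.take k) 0 h1, ← List.getD_eq_getElem (B.take k) 0 h2,
      getD_take' _ _ _ hik, getD_take' _ _ _ hik]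
    exact h i hik

lemma agree_of_take_eq (A B : List ℕ) (k : ℕ) (h : A.take k = B.take k) :
    ∀ i < k, A.getD i 0 = B.getD i 0 := by
  intro i hi
  have := congrArg (fun l => List.getD l i 0) h
  rw [getD_take' A k i hi, getD_take' B k i hi] at this
  exact this

lemma lex_lt_of_getD : ∀ (k : ℕ) (A B : List ℕ), (∀ i < k, A.getD i 0 = B.getD i 0) →
    k < A.length → k < B.length → A.getD k 0 < B.getD k 0 → A < B := by
  intro k
  induction k with
  | zero =>
    intro A B _ hA hB hlt
    cases A with
    | nil => simp at hA
    | cons a A =>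
      cases B with
      | nil => simp at hB
      | cons b B =>
        rw [lt_iff_lex]
        exact List.Lex.rel (by simpa using hlt)
  | succ k ih =>
    intro A B h hA hB hlt
    cases A with
    | nil => simp at hA
    | cons a A =>
      cases B with
      | nil => simp at hB
      | cons b B =>
        have hab : a = b := by simpa using h 0 (by omega)
        subst hab
        rw [lt_iff_lex]
        apply List.Lex.cons
        rw [← lt_iff_lex]
        exact ih A B (fun i hi => by simpa using h (i+1) (by omega))
          (by simpa using hA) (by simpa using hB) (by simpa using hlt)

lemma lex_lt_of_prefix : ∀ (k : ℕ) (A B : List ℕ), A.take k = B.take k →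
    A.length = k → k < B.length → A < B := by
  intro k
  induction k with
  | zero =>
    intro A B _ hA hB
    have : A = [] := List.length_eq_zero_iff.mp hA
    subst this
    cases B with
    | nil => simp at hB
    | cons b B => rw [lt_iff_lex]; exact List.Lex.nil
  | succ k ih =>
    intro A B h hA hB
    cases A with
    | nil => simp at hA
    | cons a A =>
      cases B with
      | nil => simp at hB
      | cons b B =>
        simp only [List.take_succ_cons, List.cons.injEq] at h
        obtain ⟨hab, htail⟩ := h
        subst hab
        rw [lt_iff_lex]
        apply List.Lex.cons
        rw [← lt_iff_lex]
        exact ih A B htail (by simpa using hA) (by simpa using hB)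

lemma ne_of_getD_ne (A B : List ℕ) (i : ℕ) (h : A.getD i 0 ≠ B.getD i 0) : A ≠ B := by
  intro he; exact h (by rw [he])

/- ===== period machinery ===== -/

/-- `A` is `p`-periodic on its prefix of length `e` (0-indexed characters). -/
def PerUpto (A : List ℕ) (p e : ℕ) : Prop :=
  ∀ i, i + p < e → A.getD i 0 = A.getD (i + p) 0

lemma isPeriod_length (S : List ℕ) (h : S ≠ []) : IsPeriod S S.length := by
  refine ⟨?_, le_refl _, fun i hi => by omega⟩
  have := List.length_pos_iff.mpr h
  omega

lemma per_isPeriod (S : List ℕ) (h : S ≠ []) : IsPeriod S (per S) := by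
  have : {p | IsPeriod S p}.Nonempty := ⟨S.length, isPeriod_length S h⟩
  exact Nat.sInf_mem this

lemma per_le (S : List ℕ) (p : ℕ) (h : IsPeriod S p) : per S ≤ p := Nat.sInf_le h

lemma perUpto_of_take (A : List ℕ) (p k : ℕ) (hk : k ≤ A.length)
    (h : IsPeriod (A.take k) p) : PerUpto A p k := by
  intro i hi
  have hlen : (A.take k).length = k := by simp; omega
  have := h.2.2 i (by omega)
  rwa [getD_take' _ _ _ (by omega), getD_take' _ _ _ (by omega)] at this

lemma isPeriod_take_of_perUpto (A : List ℕ) (p k : ℕ) (hp : 1 ≤ p) (hpk : p ≤ k)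
    (hk : k ≤ A.length) (h : PerUpto A p k) : IsPeriod (A.take k) p := by
  have hlen : (A.take k).length = k := by simp; omega
  refine ⟨hp, by omega, fun i hi => ?_⟩
  rw [hlen] at hi
  rw [getD_take' _ _ _ (by omega), getD_take' _ _ _ (by omega)]
  exact h i hi

lemma agree_of_periodic (A B : List ℕ) (p e f : ℕ) (hp : 1 ≤ p)
    (hA : PerUpto A p e) (hB : PerUpto B p f)
    (h0 : ∀ i < p, A.getD i 0 = B.getD i 0) :
    ∀ i, i < e → i < f → A.getD i 0 = B.getD i 0 := by
  intro i
  induction i using Nat.strong_induction_on with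
  | _ i ih =>
    intro hie hif
    by_cases hip : i < p
    · exact h0 i hip
    · have h1 : (i - p) + p = i := by omega
      have e1 : A.getD (i-p) 0 = A.getD i 0 := by
        have := hA (i-p) (by omega); rwa [h1] at this
      have e2 : B.getD (i-p) 0 = B.getD i 0 := by
        have := hB (i-p) (by omega); rwa [h1] at this
      rw [← e1, ← e2]
      exact ih (i-p) (by omega) (by omega) (by omega)

lemma agree_head (A B : List ℕ) (p s e : ℕ) (hp : 1 ≤ p) (hsp : s < p) (h2p : 2*p ≤ e)
    (hA : PerUpto A p e) (hB : PerUpto B p e)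
    (hagree : ∀ i, s ≤ i → i < s + p → A.getD i 0 = B.getD i 0) :
    ∀ i < p, A.getD i 0 = B.getD i 0 := by
  intro i hip
  by_cases his : s ≤ i
  · exact hagree i his (by omega)
  · have e1 := hA i (by omega)
    have e2 := hB i (by omega)
    rw [e1, e2]
    exact hagree (i+p) (by omega) (by omega)

/- ===== lex order extras ===== -/

lemma lex_asymm : ∀ (A B : List ℕ), A < B → ¬ B < A := by
  intro A B h
  rw [lt_iff_lex] at h
  induction h with
  | nil => intro h2; rw [lt_iff_lex] at h2; cases h2
  | @rel a l1 b l2 hab =>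
    intro h2; rw [lt_iff_lex] at h2
    cases h2 with
    | rel h' => omega
    | cons h' => omega
  | @cons a l1 l2 h ih =>
    intro h2; rw [lt_iff_lex] at h2
    cases h2 with
    | rel h' => omega
    | cons h' => exact ih h'

lemma lt_iff_of_break (A B : List ℕ) (k : ℕ) (hA : k < A.length) (hB : k < B.length)
    (hag : ∀ i < k, A.getD i 0 = B.getD i 0) (hne : A.getD k 0 ≠ B.getD k 0) :
    (A < B ↔ A.getD k 0 < B.getD k 0) ∧ A ≠ B ∧ lcp A B = k := by
  refine ⟨⟨?_, fun h => lex_lt_of_getD k A B hag hA hB h⟩,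
    ne_of_getD_ne A B k hne, lcp_eq_of_break A B k hA hB hag hne⟩
  intro h
  by_contra hc
  have hlt : B.getD k 0 < A.getD k 0 := by omega
  have : B < A := lex_lt_of_getD k B A (fun i hi => (hag i hi).symm) hB hA hlt
  exact lex_asymm A B h this

/- ===== pattern-side facts ===== -/

lemma periodic_basic (τ : ℕ) (X : List ℕ) (hτ : 1 ≤ τ) (h : Periodic τ X) :
    1 ≤ perP τ X ∧ perP τ X ≤ 3*τ-1 ∧ PerUpto X (perP τ X) (3*τ-1) := by
  obtain ⟨hlen, hper⟩ := h
  have hne : X.take (3*τ-1) ≠ [] := by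
    apply List.length_pos_iff.mp
    simp only [List.length_take]
    omega
  have hp := per_isPeriod _ hne
  have hlen' : (X.take (3*τ-1)).length = 3*τ-1 := by simp; omega
  refine ⟨hp.1, ?_, perUpto_of_take X _ _ (by omega) hp⟩
  have := hp.2.1
  omega

lemma pend_facts (τ : ℕ) (X : List ℕ) (hτ : 1 ≤ τ) (h : Periodic τ X) :
    3*τ-1 ≤ pend τ X - 1 ∧ pend τ X - 1 ≤ X.length ∧
    pend τ X = (pend τ X - 1) + 1 ∧
    PerUpto X (perP τ X) (pend τ X - 1) ∧
    (pend τ X - 1 < X.length →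
      X.getD (pend τ X - 1) 0 ≠ X.getD (pend τ X - 1 - perP τ X) 0) := by
  obtain ⟨hp1, hp2, hPU⟩ := periodic_basic τ X hτ h
  obtain ⟨hlen, hper3⟩ := h
  set p := perP τ X with hpdef
  set L := lcp X (X.drop p) with hLdef
  have hpend : pend τ X = 1 + p + L := rfl
  have hdl : (X.drop p).length = X.length - p := by simp
  have hLle : L ≤ X.length - p := by
    have := lcp_le_min X (X.drop p)
    rw [hdl] at this; omega
  have hLge : 3*τ-1-p ≤ L := by
    apply le_lcp
    · omega
    · simp; omega
    · intro i hi
      rw [getD_drop']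
      have := hPU i (by omega)
      rw [show p + i = i + p from by omega]
      exact this
  have ht : pend τ X - 1 = p + L := by omega
  refine ⟨by omega, by omega, by omega, ?_, ?_⟩
  · intro i hi
    rw [ht] at hi
    have := getD_eq_of_lt_lcp X (X.drop p) i (by omega)
    rw [getD_drop'] at this
    rw [show i + p = p + i from by omega]
    exact this
  · intro hlt
    rw [ht] at hlt ⊢
    have hne := lcp_getD_ne X (X.drop p) (by omega) (by rw [hdl]; omega)
    rw [getD_drop'] at hne
    rw [show p + L - p = L from by omega]
    exact fun hc => hne hc.symm

lemma typP_iff (τ : ℕ) (X : List ℕ) (hτ : 1 ≤ τ) (h : Periodic τ X) :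
    (typP τ X = 1 ↔ (pend τ X - 1 < X.length ∧
      X.getD (pend τ X - 1 - perP τ X) 0 < X.getD (pend τ X - 1) 0)) ∧
    (typP τ X = 1 ∨ typP τ X = -1) := by
  obtain ⟨hp1, hp2, hPU⟩ := periodic_basic τ X hτ h
  have hpend : pend τ X = 1 + perP τ X + lcp X (X.drop (perP τ X)) := rfl
  constructor
  · unfold typP idx
    have e1 : pend τ X - perP τ X - 1 = pend τ X - 1 - perP τ X := by omega
    split_ifs with hc
    · simp only [true_iff, iff_true]
      refine ⟨by omega, ?_⟩
      rw [← e1]; exact hc.2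
    · constructor
      · intro h'; exact absurd h' (by norm_num)
      · intro ⟨ha, hb⟩; exact absurd ⟨by omega, by rw [e1]; exact hb⟩ hc
  · unfold typP; split_ifs <;> simp

lemma lrootP_facts (τ : ℕ) (X : List ℕ) (hτ : 1 ≤ τ) (h : Periodic τ X) :
    (LrootP τ X).length = perP τ X ∧ LheadP τ X < perP τ X ∧
    (X.drop (LheadP τ X)).take (perP τ X) = LrootP τ X := by
  obtain ⟨hp1, hp2, hPU⟩ := periodic_basic τ X hτ h
  obtain ⟨hXlen, hper3⟩ := h
  set p := perP τ X with hpdef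
  set F := (Finset.range p).image (fun t => (X.drop t).take p) with hFdef
  have hFne : F.Nonempty := by
    refine ⟨(X.drop 0).take p, ?_⟩
    rw [hFdef]
    exact Finset.mem_image_of_mem _ (Finset.mem_range.mpr (by omega))
  have hroot : LrootP τ X = F.min' hFne := by
    unfold LrootP
    rw [← hFdef, ← Finset.coe_min' hFne]
    rfl
  have hmem : LrootP τ X ∈ F := hroot ▸ Finset.min'_mem F hFne
  rw [hFdef] at hmem
  obtain ⟨t, htmem, hft⟩ := Finset.mem_image.mp hmem
  have htp : t < p := Finset.mem_range.mp htmem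
  have hlenroot : (LrootP τ X).length = p := by
    rw [← hft]; simp; omega
  have hSne : t ∈ {s | s < p ∧ (X.drop s).take p = LrootP τ X} := ⟨htp, hft⟩
  have hhead := Nat.sInf_mem ⟨t, hSne⟩
  exact ⟨hlenroot, hhead.1, hhead.2⟩

lemma lrootP_congr (τ : ℕ) (X Y : List ℕ) (hτ : 1 ≤ τ) (hX : Periodic τ X)
    (h : X.take (3*τ-1) = Y.take (3*τ-1)) (hYlen : 3*τ-1 ≤ Y.length) :
    perP τ X = perP τ Y ∧ LrootP τ X = LrootP τ Y ∧ LheadP τ X = LheadP τ Y := by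
  obtain ⟨hp1, hp2, hPU⟩ := periodic_basic τ X hτ hX
  obtain ⟨hXlen, hper3⟩ := hX
  have hper : perP τ X = perP τ Y := by
    unfold perP per; rw [h]
  set p := perP τ X with hpdef
  have hag := agree_of_take_eq X Y (3*τ-1) h
  have hwin : ∀ t, t < p → (X.drop t).take p = (Y.drop t).take p := by
    intro t htp
    apply take_eq_of_agree
    · simp; omega
    · simp; omega
    · intro i hi
      rw [getD_drop', getD_drop']
      exact hag (t+i) (by omega)
  have hroot : LrootP τ X = LrootP τ Y := by
    unfold LrootP
    rw [← hper]
    congr 2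
    apply Finset.image_congr
    intro t ht
    simp only [Finset.coe_range, Set.mem_Iio] at ht
    exact hwin t ht
  refine ⟨hper, hroot, ?_⟩
  unfold LheadP
  rw [← hper, ← hroot]
  congr 1
  ext z
  simp only [Set.mem_setOf_eq]
  constructor
  · intro ⟨hz, he⟩; exact ⟨hz, by rw [← hwin z hz]; exact he⟩
  · intro ⟨hz, he⟩; exact ⟨hz, by rw [hwin z hz]; exact he⟩

/- ===== T-side translation and window facts ===== -/

lemma window_eq (T : List ℕ) (τ i : ℕ) (hτ : 1 ≤ τ) :
    sub T i (i + 3*τ - 1) = (T.drop (i-1)).take (3*τ-1) := by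
  unfold sub
  congr 1
  omega

lemma suf_take (T : List ℕ) (τ j : ℕ) (hτ : 1 ≤ τ) :
    sub T j (j + 3*τ - 1) = (suf T j).take (3*τ-1) :=
  window_eq T τ j hτ

lemma window_len (T : List ℕ) (τ i : ℕ) (hτ : 1 ≤ τ) (h1 : 1 ≤ i)
    (h2 : i + 3*τ ≤ T.length + 2) : (sub T i (i + 3*τ - 1)).length = 3*τ-1 := by
  rw [window_eq T τ i hτ]
  simp only [List.length_take, List.length_drop]
  omega

lemma sub_window (T : List ℕ) (j t q : ℕ) (hj : 1 ≤ j) :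
    sub T (j+t) (j+t+q) = ((suf T j).drop t).take q := by
  unfold sub suf
  rw [List.drop_drop]
  congr 1
  · omega
  · congr 1
    omega

lemma side_translate (T : List ℕ) (τ j : ℕ) (hτ : 1 ≤ τ) (hj : 1 ≤ j) :
    per (sub T j (j + 3*τ - 1)) = perP τ (suf T j) ∧
    Lroot T τ j = LrootP τ (suf T j) ∧ Lhead T τ j = LheadP τ (suf T j) := by
  have hper : per (sub T j (j + 3*τ - 1)) = perP τ (suf T j) := by
    rw [suf_take T τ j hτ]; rfl
  have hfun : (fun t => sub T (j+t) (j+t+per (sub T j (j + 3*τ - 1)))) =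
      (fun t => ((suf T j).drop t).take (perP τ (suf T j))) := by
    funext t
    rw [sub_window T j t _ hj, hper]
  have hroot : Lroot T τ j = LrootP τ (suf T j) := by
    unfold Lroot LrootP
    rw [hfun, hper]
  refine ⟨hper, hroot, ?_⟩
  unfold Lhead LheadP
  congr 1
  ext z
  simp only [Set.mem_setOf_eq, sub_window T j z _ hj, hper, hroot]

lemma mem_R_iff (T : List ℕ) (τ i : ℕ) :
    i ∈ R T τ ↔ 1 ≤ i ∧ i + 3*τ ≤ T.length + 2 ∧ 3 * per (sub T i (i + 3*τ - 1)) ≤ τ :=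
  Iff.rfl

lemma windowR_facts (T : List ℕ) (τ i : ℕ) (hτ : 1 ≤ τ) (hiR : i ∈ R T τ) :
    1 ≤ per (sub T i (i + 3*τ - 1)) ∧
    (∀ x, x + per (sub T i (i + 3*τ - 1)) < 3*τ-1 →
      T.getD (i-1+x) 0 = T.getD (i-1+x+per (sub T i (i + 3*τ - 1))) 0) := by
  obtain ⟨h1, h2, h3⟩ := (mem_R_iff T τ i).mp hiR
  have hlen := window_len T τ i hτ h1 h2
  have hne : sub T i (i + 3*τ - 1) ≠ [] := by
    apply List.length_pos_iff.mp; omega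
  obtain ⟨hq1, hq2, hq3⟩ := per_isPeriod _ hne
  set q := per (sub T i (i + 3*τ - 1)) with hqdef
  refine ⟨hq1, fun x hx => ?_⟩
  have h5 := hq3 x (by rw [hlen]; omega)
  rw [window_eq T τ i hτ, getD_take' _ _ _ (by omega), getD_take' _ _ _ (by omega),
    getD_drop', getD_drop'] at h5
  rw [show i-1+x+q = i-1+(x+q) from by omega]
  exact h5

lemma w_notin_R (T : List ℕ) (n τ : ℕ) (hτ : 1 ≤ τ) (hn3 : 3*τ ≤ n + 1)
    (hlen : T.length = n) (hlast : idx T n = 0)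
    (huniq : ∀ i, 1 ≤ i → i < n → idx T i ≠ 0) :
    (n + 2 - 3*τ) ∉ R T τ := by
  intro hR
  set w := n + 2 - 3*τ with hw
  obtain ⟨h1, h2, h3⟩ := (mem_R_iff T τ w).mp hR
  obtain ⟨hq1, hqe⟩ := windowR_facts T τ w hτ hR
  set q := per (sub T w (w + 3*τ - 1)) with hq
  have hx := hqe (3*τ-2-q) (by omega)
  have hTn : T.getD (n-1) 0 = 0 := hlast
  have hidx : w-1+(3*τ-2-q)+q = n-1 := by omega
  have hidx2 : w-1+(3*τ-2-q) = n-1-q := by omega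
  rw [hidx, hidx2, hTn] at hx
  have := huniq (n-q) (by omega) (by omega)
  unfold idx at this
  rw [show n-q-1 = n-1-q from by omega] at this
  exact this hx

/- ===== run structure ===== -/

lemma run_facts (T : List ℕ) (n τ j : ℕ) (hτ : 1 ≤ τ) (hlen : T.length = n)
    (hlast : idx T n = 0) (huniq : ∀ i, 1 ≤ i → i < n → idx T i ≠ 0)
    (hjR : j ∈ R T τ) :
    3*τ-1 ≤ rend T τ j - j ∧ rend T τ j ≤ n ∧ rend T τ j = j + (rend T τ j - j) ∧
    PerUpto (suf T j) (per (sub T j (j + 3*τ - 1))) (rend T τ j - j) ∧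
    (suf T j).getD (rend T τ j - j - per (sub T j (j + 3*τ - 1))) 0 ≠
      (suf T j).getD (rend T τ j - j) 0 ∧
    rend T τ j - j < (suf T j).length := by
  obtain ⟨hj1, hj2, hj3⟩ := (mem_R_iff T τ j).mp hjR
  rw [hlen] at hj2
  set p := per (sub T j (j + 3*τ - 1)) with hpdef
  obtain ⟨hp1, hpe⟩ := windowR_facts T τ j hτ hjR
  rw [← hpdef] at hp1 hpe
  set w := n + 2 - 3*τ with hwdef
  have hwR : w ∉ R T τ := w_notin_R T n τ hτ (by omega) hlen hlast huniq
  set E : Set ℕ := {j' | j ≤ j' ∧ j' ∉ R T τ} with hEdef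
  have hEne : E.Nonempty := ⟨w, by omega, hwR⟩
  set e := sInf E with hedef
  have heE : j ≤ e ∧ e ∉ R T τ := Nat.sInf_mem hEne
  have hew : e ≤ w := Nat.sInf_le ⟨by omega, hwR⟩
  have hje : j < e := by
    rcases Nat.lt_or_ge j e with h | h
    · exact h
    · exfalso
      have h1 := heE.1
      have : e = j := by omega
      exact heE.2 (this ▸ hjR)
  have hmem : ∀ i, j ≤ i → i < e → i ∈ R T τ := by
    intro i hji hie
    by_contra hc
    have := Nat.sInf_le (show i ∈ E from ⟨hji, hc⟩)
    omega
  have hrend : rend T τ j = e + 3*τ - 2 := rfl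
  -- run periodicity in T coordinates
  have claim : ∀ k, k ≤ e-1-j → ∀ x, x + p < k + (3*τ-1) →
      T.getD (j-1+x) 0 = T.getD (j-1+x+p) 0 := by
    intro k
    induction k with
    | zero =>
      intro _ x hx
      exact hpe x (by omega)
    | succ k ih =>
      intro hk x hx
      by_cases hx' : x + p < k + (3*τ-1)
      · exact ih (by omega) x hx'
      · have hxe : x + p = k + 3*τ - 1 := by omega
        have hiR : j+k+1 ∈ R T τ := hmem (j+k+1) (by omega) (by omega)
        obtain ⟨hq1, hqe⟩ := windowR_facts T τ (j+k+1) hτ hiR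
        set q := per (sub T (j+k+1) (j+k+1 + 3*τ - 1)) with hqdef
        have hq3 : 3*q ≤ τ := ((mem_R_iff T τ (j+k+1)).mp hiR).2.2
        have hp3 : 3*p ≤ τ := hj3
        have s1 := hqe (3*τ-2-q) (by omega)
        have s2 := ih (by omega) (k+3*τ-1-q-p) (by omega)
        have s3 := hqe (3*τ-2-q-p) (by omega)
        calc T.getD (j-1+x) 0
            = T.getD (j+k+1-1+(3*τ-2-q-p)+q) 0 :=
              congrArg (fun z => T.getD z 0) (by omega)
          _ = T.getD (j+k+1-1+(3*τ-2-q-p)) 0 := s3.symm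
          _ = T.getD (j-1+(k+3*τ-1-q-p)) 0 :=
              congrArg (fun z => T.getD z 0) (by omega)
          _ = T.getD (j-1+(k+3*τ-1-q-p)+p) 0 := s2
          _ = T.getD (j+k+1-1+(3*τ-2-q)) 0 :=
              congrArg (fun z => T.getD z 0) (by omega)
          _ = T.getD (j+k+1-1+(3*τ-2-q)+q) 0 := s1
          _ = T.getD (j-1+x+p) 0 :=
              congrArg (fun z => T.getD z 0) (by omega)
  have ht' : rend T τ j - j = (e-1-j) + (3*τ-1) := by omega
  have hPU : PerUpto (suf T j) p (rend T τ j - j) := by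
    intro x hx
    unfold suf
    rw [getD_drop', getD_drop']
    rw [show j-1+(x+p) = j-1+x+p from by omega]
    exact claim (e-1-j) le_rfl x (by omega)
  have hrn : rend T τ j ≤ n := by omega
  -- maximality
  have hbreak : (suf T j).getD (rend T τ j - j - p) 0 ≠ (suf T j).getD (rend T τ j - j) 0 := by
    intro heq
    apply heE.2
    rw [mem_R_iff]
    have hwlen : (sub T e (e + 3*τ - 1)).length = 3*τ-1 :=
      window_len T τ e hτ (by omega) (by omega)
    refine ⟨by omega, by omega, ?_⟩
    have hIsP : IsPeriod (sub T e (e + 3*τ - 1)) p := by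
      refine ⟨hp1, by omega, fun y hy => ?_⟩
      rw [hwlen] at hy
      rw [window_eq T τ e hτ, getD_take' _ _ _ (by omega), getD_take' _ _ _ (by omega),
        getD_drop', getD_drop']
      have hz1 : e-1+y = j-1+(e-j+y) := by omega
      have hz2 : e-1+(y+p) = j-1+(e-j+y+p) := by omega
      rw [hz1, hz2]
      rcases Nat.lt_or_ge (e-j+y+p) (rend T τ j - j) with hcase | hcase
      · have := hPU (e-j+y) (by omega)
        unfold suf at this
        rw [getD_drop', getD_drop'] at this
        exact this
      · have hz3 : e-j+y = rend T τ j - j - p := by omega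
        have hz4 : e-j+y+p = rend T τ j - j := by omega
        rw [hz4, hz3]
        unfold suf at heq
        rw [getD_drop', getD_drop'] at heq
        exact heq
    have := per_le _ _ hIsP
    omega
  have hlA : (suf T j).length = n - j + 1 := by
    unfold suf
    rw [List.length_drop, hlen]
    omega
  exact ⟨by omega, hrn, by omega, hPU, hbreak, by omega⟩

lemma typT_iff (T : List ℕ) (n τ j : ℕ) (hlen : T.length = n) (hrn : rend T τ j ≤ n)
    (hj1 : 1 ≤ j) (hjr : j < rend T τ j)
    (hple : per (sub T j (j + 3*τ - 1)) ≤ rend T τ j - j) :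
    (typ T τ j = 1 ↔ (suf T j).getD (rend T τ j - j - per (sub T j (j + 3*τ - 1))) 0
        < (suf T j).getD (rend T τ j - j) 0) ∧ (typ T τ j = 1 ∨ typ T τ j = -1) := by
  have e1 : (suf T j).getD (rend T τ j - j) 0 = idx T (rend T τ j) := by
    unfold suf idx
    rw [getD_drop']
    congr 1
    omega
  have e2 : (suf T j).getD (rend T τ j - j - per (sub T j (j + 3*τ - 1))) 0
      = idx T (rend T τ j - per (sub T j (j + 3*τ - 1))) := by
    unfold suf idx
    rw [getD_drop']
    congr 1
    omega
  constructor
  · unfold typ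
    split_ifs with hc
    · constructor
      · intro _
        rw [e1, e2]
        exact hc.2
      · intro _; rfl
    · constructor
      · intro h'; exact absurd h' (by norm_num)
      · intro h'
        exfalso
        apply hc
        refine ⟨by omega, ?_⟩
        rw [← e1, ← e2]
        exact h'
  · unfold typ; split_ifs <;> simp

/-- Lemma: comparing a periodic pattern with the suffixes of `T`. -/
theorem statement_10
    (σ n τ : ℕ) (T : List ℕ)
    (hσ : 2 ≤ σ) (hn : 2 ≤ n) (hτ : 1 ≤ τ)
    (hlen : T.length = n) (halph : ∀ c ∈ T, c < σ)
    (hlast : idx T n = 0) (huniq : ∀ i, 1 ≤ i → i < n → idx T i ≠ 0)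
    (P : List ℕ) (m : ℕ) (hm : P.length = m) (halphP : ∀ c ∈ P, c < σ)
    (hperiodic : Periodic τ P)
    (s : ℕ) (hs : s = LheadP τ P) (H : List ℕ) (hH : H = LrootP τ P) :
    ∀ j, 1 ≤ j → j ≤ n →
      ((3 * τ - 1 ≤ lcp P (suf T j) ↔ j ∈ RsH T τ s H) ∧
       (j ∈ RsH T τ s H → ∀ t t' : ℕ, t = pend τ P - 1 → t' = rend T τ j - j →
         min t t' ≤ lcp P (suf T j) ∧
         (typP τ P ≠ typ T τ j → (P < suf T j ↔ typP τ P < typ T τ j)) ∧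
         (typP τ P = -1 → typ T τ j = -1 → t ≠ t' → (P < suf T j ↔ t < t')) ∧
         (typP τ P = 1 → typ T τ j = 1 → t ≠ t' → (P < suf T j ↔ t' < t)) ∧
         ((typP τ P ≠ typ T τ j ∨ t ≠ t') →
           P ≠ suf T j ∧ lcp P (suf T j) = min t t'))) := by
  intro j hj1 hjn
  have hpcopy : 3*τ-1 ≤ P.length ∧ 3 * perP τ P ≤ τ := hperiodic
  obtain ⟨hPlen3, hPper3⟩ := hpcopy
  obtain ⟨hp1, hp2, hPU3⟩ := periodic_basic τ P hτ hperiodic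
  obtain ⟨hHlen, hs_lt, hHwin⟩ := lrootP_facts τ P hτ hperiodic
  rw [← hH] at hHlen hHwin
  rw [← hs] at hs_lt hHwin
  obtain ⟨hpend1, hpend2, hpend3, hPUt, hPbreak⟩ := pend_facts τ P hτ hperiodic
  obtain ⟨htypP1, htypP2⟩ := typP_iff τ P hτ hperiodic
  have hAlen : (suf T j).length = n - j + 1 := by
    unfold suf
    rw [List.length_drop, hlen]
    omega
  obtain ⟨htr_per, htr_root, htr_head⟩ := side_translate T τ j hτ hj1
  -- backward core
  have hback : j ∈ RsH T τ s H →
      (j + 3*τ ≤ n + 2 ∧ per (sub T j (j + 3*τ - 1)) = (perP τ P) ∧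
       ∀ i < 3*τ-1, P.getD i 0 = (suf T j).getD i 0) := by
    intro hjRsH
    obtain ⟨hjR, hroot, hhead⟩ := hjRsH
    obtain ⟨_, hj2, hj3⟩ := (mem_R_iff T τ j).mp hjR
    rw [hlen] at hj2
    have hAlen3 : 3*τ-1 ≤ (suf T j).length := by omega
    have hApd : Periodic τ (suf T j) := ⟨hAlen3, by rw [← htr_per]; exact hj3⟩
    obtain ⟨hHlenA, hsltA, hHwinA⟩ := lrootP_facts τ (suf T j) hτ hApd
    have hrootA : LrootP τ (suf T j) = H := by rw [← htr_root]; exact hroot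
    have hheadA : LheadP τ (suf T j) = s := by rw [← htr_head]; exact hhead
    rw [hrootA] at hHlenA hHwinA
    rw [hheadA] at hsltA hHwinA
    have hperA : perP τ (suf T j) = (perP τ P) := by omega
    obtain ⟨hpA1, hpA2, hAPU3⟩ := periodic_basic τ (suf T j) hτ hApd
    rw [hperA] at hAPU3 hHwinA
    have hagHead : ∀ i, s ≤ i → i < s + (perP τ P) → P.getD i 0 = (suf T j).getD i 0 := by
      intro i hi1 hi2
      have h1 := agree_of_take_eq (P.drop s) ((suf T j).drop s) (perP τ P)
        (by rw [hHwin, hHwinA]) (i - s) (by omega)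
      rw [getD_drop', getD_drop'] at h1
      rwa [show s + (i-s) = i from by omega] at h1
    have hag0 : ∀ i < (perP τ P), P.getD i 0 = (suf T j).getD i 0 :=
      agree_head P (suf T j) (perP τ P) s (3*τ-1) hp1 hs_lt (by omega) hPU3 hAPU3 hagHead
    have hag3 : ∀ i < 3*τ-1, P.getD i 0 = (suf T j).getD i 0 := fun i hi =>
      agree_of_periodic P (suf T j) (perP τ P) (3*τ-1) (3*τ-1) hp1 hPU3 hAPU3 hag0 i hi hi
    refine ⟨by omega, ?_, hag3⟩
    rw [htr_per, hperA]
  constructor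
  · -- the iff
    constructor
    · -- forward
      intro hlcp
      have hlcpA := lcp_le_min P (suf T j)
      have hAge : 3*τ-1 ≤ (suf T j).length := by omega
      have htake : P.take (3*τ-1) = (suf T j).take (3*τ-1) :=
        take_eq_of_agree P (suf T j) _ (by omega) (by omega)
          (fun i hi => getD_eq_of_lt_lcp P (suf T j) i (by omega))
      obtain ⟨hcper, hcroot, hchead⟩ := lrootP_congr τ P (suf T j) hτ hperiodic htake hAge
      refine ⟨?_, ?_, ?_⟩
      · rw [mem_R_iff]
        refine ⟨hj1, by rw [hlen]; omega, ?_⟩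
        rw [htr_per, ← hcper]
        exact hPper3
      · rw [htr_root, ← hcroot, hH]
      · rw [htr_head, ← hchead, hs]
    · -- backward
      intro hjRsH
      obtain ⟨hj2, hperj, hag3⟩ := hback hjRsH
      exact le_lcp _ P (suf T j) (by omega) (by omega) hag3
  · -- claim B
    intro hjRsH t t' ht ht'
    subst ht
    subst ht'
    obtain ⟨hj2, hperj, hag3⟩ := hback hjRsH
    have hjR : j ∈ R T τ := hjRsH.1
    obtain ⟨hrf1, hrf2, hrf3, hrf4, hrf5, hrf6⟩ := run_facts T n τ j hτ hlen hlast huniq hjR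
    rw [hperj] at hrf4 hrf5
    have hTT := typT_iff T n τ j hlen hrf2 hj1 (by omega) (by rw [hperj]; omega)
    rw [hperj] at hTT
    obtain ⟨htypT1, htypT2⟩ := hTT
    have hagmin : ∀ i, i < (pend τ P - 1) → i < (rend T τ j - j) → P.getD i 0 = (suf T j).getD i 0 :=
      agree_of_periodic P (suf T j) (perP τ P) (pend τ P - 1) (rend T τ j - j) hp1 hPUt hrf4 (fun i hi => hag3 i (by omega))
    have hlcpmin : min (pend τ P - 1) (rend T τ j - j) ≤ lcp P (suf T j) :=
      le_lcp _ _ _ (by omega) (by omega) (fun i hi => hagmin i (by omega) (by omega))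
    rcases lt_trichotomy (pend τ P - 1) (rend T τ j - j) with hcase | hcase | hcase
    · -- (pend τ P - 1) < (rend T τ j - j)
      by_cases htm : (pend τ P - 1) < P.length
      · -- break inside P
        have hbrk : P.getD (pend τ P - 1) 0 ≠ P.getD ((pend τ P - 1) - (perP τ P)) 0 := hPbreak htm
        have eA : (suf T j).getD (pend τ P - 1) 0 = (suf T j).getD ((pend τ P - 1) - (perP τ P)) 0 := by
          have := hrf4 ((pend τ P - 1) - (perP τ P)) (by omega)
          rw [show (pend τ P - 1) - (perP τ P) + (perP τ P) = (pend τ P - 1) from by omega] at this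
          exact this.symm
        have eP : (suf T j).getD ((pend τ P - 1) - (perP τ P)) 0 = P.getD ((pend τ P - 1) - (perP τ P)) 0 :=
          (hagmin ((pend τ P - 1) - (perP τ P)) (by omega) (by omega)).symm
        have hne : P.getD (pend τ P - 1) 0 ≠ (suf T j).getD (pend τ P - 1) 0 := by
          rw [eA, eP]; exact hbrk
        obtain ⟨hPA, hPne, hlcpv⟩ := lt_iff_of_break P (suf T j) (pend τ P - 1) (by omega) (by omega)
          (fun i hi => hagmin i (by omega) (by omega)) hne
        have hPiff : P < (suf T j) ↔ typP τ P = -1 := by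
          constructor
          · intro h
            rcases htypP2 with h1 | h1
            · exfalso
              have h2 := (htypP1.mp h1).2
              have h3 := hPA.mp h
              rw [eA, eP] at h3
              omega
            · exact h1
          · intro h1
            apply hPA.mpr
            rw [eA, eP]
            have h2 : ¬ ((pend τ P - 1) < P.length ∧ P.getD ((pend τ P - 1) - (perP τ P)) 0 < P.getD (pend τ P - 1) 0) := by
              intro hc
              have := htypP1.mpr hc
              omega
            have h3 : ¬ P.getD ((pend τ P - 1) - (perP τ P)) 0 < P.getD (pend τ P - 1) 0 := fun hc => h2 ⟨htm, hc⟩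
            omega
        refine ⟨hlcpmin, ?_, ?_, ?_, ?_⟩
        · intro hne_t
          rcases htypP2 with hP1 | hP1 <;> rcases htypT2 with hT1 | hT1
          · exact absurd (hP1.trans hT1.symm) hne_t
          · constructor
            · intro h
              have := hPiff.mp h
              omega
            · intro h
              rw [hP1, hT1] at h
              omega
          · exact iff_of_true (hPiff.mpr hP1) (by omega)
          · exact absurd (hP1.trans hT1.symm) hne_t
        · intro hP1 _ _
          exact iff_of_true (hPiff.mpr hP1) hcase
        · intro hP1 _ _
          refine iff_of_false (fun h => ?_) (by omega)
          have := hPiff.mp h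
          omega
        · intro _
          exact ⟨hPne, by omega⟩
      · -- P exhausted: (pend τ P - 1) = P.length
        have htm' : (pend τ P - 1) = P.length := by omega
        have htypPm1 : typP τ P = -1 := by
          rcases htypP2 with h1 | h1
          · exfalso
            have := (htypP1.mp h1).1
            omega
          · exact h1
        have htake : P.take (pend τ P - 1) = (suf T j).take (pend τ P - 1) :=
          take_eq_of_agree P (suf T j) (pend τ P - 1) (by omega) (by omega)
            (fun i hi => hagmin i (by omega) (by omega))
        have hPlt : P < (suf T j) := lex_lt_of_prefix (pend τ P - 1) P (suf T j) htake (by omega) (by omega)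
        have hPne : P ≠ (suf T j) := by
          intro h
          have := congrArg List.length h
          omega
        have hlcpv : lcp P (suf T j) = (pend τ P - 1) := by
          have h1 := lcp_le_min P (suf T j)
          omega
        refine ⟨hlcpmin, ?_, ?_, ?_, ?_⟩
        · intro hne_t
          rcases htypT2 with hT1 | hT1
          · exact iff_of_true hPlt (by omega)
          · exact absurd (htypPm1.trans hT1.symm) hne_t
        · intro _ _ _
          exact iff_of_true hPlt hcase
        · intro hP1 _ _
          exfalso
          omega
        · intro _
          exact ⟨hPne, by omega⟩
    · -- (pend τ P - 1) = (rend T τ j - j)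
      have hc23 : ∀ (X : Prop), typP τ P = 1 ∨ typP τ P = -1 → (pend τ P - 1) ≠ (rend T τ j - j) → X → X := by
        intro X _ habs
        exact absurd hcase habs
      have core : typP τ P ≠ typ T τ j →
          ((P < (suf T j) ↔ typP τ P < typ T τ j) ∧ P ≠ (suf T j) ∧ lcp P (suf T j) = (pend τ P - 1)) := by
        intro hne_t
        rcases htypP2 with hP1 | hP1 <;> rcases htypT2 with hT1 | hT1
        · exact absurd (hP1.trans hT1.symm) hne_t
        · -- typP = 1, typ = -1
          obtain ⟨htm, hPgt⟩ := htypP1.mp hP1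
          have hAne := hrf5
          have hAnlt : ¬ (suf T j).getD ((rend T τ j - j) - (perP τ P)) 0 < (suf T j).getD (rend T τ j - j) 0 := by
            intro hc
            have := htypT1.mpr hc
            omega
          have hAlt : (suf T j).getD (rend T τ j - j) 0 < (suf T j).getD ((rend T τ j - j) - (perP τ P)) 0 := by omega
          have eP : P.getD ((pend τ P - 1) - (perP τ P)) 0 = (suf T j).getD ((pend τ P - 1) - (perP τ P)) 0 :=
            hagmin ((pend τ P - 1) - (perP τ P)) (by omega) (by omega)
          rw [← hcase] at hAlt
          have hne : P.getD (pend τ P - 1) 0 ≠ (suf T j).getD (pend τ P - 1) 0 := by omega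
          obtain ⟨hPA, hPne, hlcpv⟩ := lt_iff_of_break P (suf T j) (pend τ P - 1) (by omega)
            (by omega) (fun i hi => hagmin i (by omega) (by omega)) hne
          refine ⟨?_, hPne, hlcpv⟩
          refine iff_of_false (fun h => ?_) (by omega)
          have := hPA.mp h
          omega
        · -- typP = -1, typ = 1
          have hAlt : (suf T j).getD ((rend T τ j - j) - (perP τ P)) 0 < (suf T j).getD (rend T τ j - j) 0 := htypT1.mp hT1
          rw [← hcase] at hAlt
          by_cases htm : (pend τ P - 1) < P.length
          · have hnot : ¬ P.getD ((pend τ P - 1) - (perP τ P)) 0 < P.getD (pend τ P - 1) 0 := by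
              intro hc
              have := htypP1.mpr ⟨htm, hc⟩
              omega
            have hbrk := hPbreak htm
            have eP : P.getD ((pend τ P - 1) - (perP τ P)) 0 = (suf T j).getD ((pend τ P - 1) - (perP τ P)) 0 :=
              hagmin ((pend τ P - 1) - (perP τ P)) (by omega) (by omega)
            have hne : P.getD (pend τ P - 1) 0 ≠ (suf T j).getD (pend τ P - 1) 0 := by omega
            obtain ⟨hPA, hPne, hlcpv⟩ := lt_iff_of_break P (suf T j) (pend τ P - 1) (by omega)
              (by omega) (fun i hi => hagmin i (by omega) (by omega)) hne
            refine ⟨?_, hPne, hlcpv⟩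
            exact iff_of_true (hPA.mpr (by omega)) (by omega)
          · have htm' : (pend τ P - 1) = P.length := by omega
            have htake : P.take (pend τ P - 1) = (suf T j).take (pend τ P - 1) :=
              take_eq_of_agree P (suf T j) (pend τ P - 1) (by omega) (by omega)
                (fun i hi => hagmin i (by omega) (by omega))
            have hPlt : P < (suf T j) := lex_lt_of_prefix (pend τ P - 1) P (suf T j) htake (by omega) (by omega)
            have hPne : P ≠ (suf T j) := by
              intro h
              have := congrArg List.length h
              omega
            have hlcpv : lcp P (suf T j) = (pend τ P - 1) := by
              have h1 := lcp_le_min P (suf T j)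
              omega
            exact ⟨iff_of_true hPlt (by omega), hPne, hlcpv⟩
        · exact absurd (hP1.trans hT1.symm) hne_t
      refine ⟨hlcpmin, fun h => (core h).1, ?_, ?_, ?_⟩
      · intro _ _ habs
        exact absurd hcase habs
      · intro _ _ habs
        exact absurd hcase habs
      · intro hd
        rcases hd with hd | hd
        · exact ⟨(core hd).2.1, by have := (core hd).2.2; omega⟩
        · exact absurd hcase hd
    · -- (rend T τ j - j) < (pend τ P - 1)
      have eP1 : P.getD ((rend T τ j - j) - (perP τ P)) 0 = P.getD (rend T τ j - j) 0 := by
        have := hPUt ((rend T τ j - j) - (perP τ P)) (by omega)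
        rwa [show (rend T τ j - j) - (perP τ P) + (perP τ P) = (rend T τ j - j) from by omega] at this
      have eP2 : P.getD ((rend T τ j - j) - (perP τ P)) 0 = (suf T j).getD ((rend T τ j - j) - (perP τ P)) 0 :=
        hagmin ((rend T τ j - j) - (perP τ P)) (by omega) (by omega)
      have hne : P.getD (rend T τ j - j) 0 ≠ (suf T j).getD (rend T τ j - j) 0 := by
        rw [← eP1, eP2]
        exact hrf5
      obtain ⟨hPA, hPne, hlcpv⟩ := lt_iff_of_break P (suf T j) (rend T τ j - j) (by omega) (by omega)
        (fun i hi => hagmin i (by omega) (by omega)) hne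
      have hPiff : P < (suf T j) ↔ typ T τ j = 1 := by
        constructor
        · intro h
          apply htypT1.mpr
          have := hPA.mp h
          omega
        · intro h
          apply hPA.mpr
          have := htypT1.mp h
          omega
      refine ⟨hlcpmin, ?_, ?_, ?_, ?_⟩
      · intro hne_t
        rcases htypP2 with hP1 | hP1 <;> rcases htypT2 with hT1 | hT1
        · exact absurd (hP1.trans hT1.symm) hne_t
        · refine iff_of_false (fun h => ?_) (by omega)
          have := hPiff.mp h
          omega
        · exact iff_of_true (hPiff.mpr hT1) (by omega)
        · exact absurd (hP1.trans hT1.symm) hne_t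
      · intro _ hT1 _
        refine iff_of_false (fun h => ?_) (by omega)
        have := hPiff.mp h
        omega
      · intro _ hT1 _
        exact iff_of_true (hPiff.mpr hT1) hcase
      · intro _
        exact ⟨hPne, by omega⟩

end CSA
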